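/- Let P = (X,≺) be a finite poset with n elements and z₁ ≺ z₂ ≺ z₃ distinct. Suppose F(k,ℓ+2) = F(k+2,ℓ) = 0 and F(k,ℓ)·F(k+1,ℓ+1) > 0. Then F(k,ℓ+1)·F(k+1,ℓ) = F(k+1,ℓ+1)·F(k,ℓ). -/

import Mathlib

/-- The number of linear extensions `L` of a finite poset `X`
(order-preserving bijections `X ≃ Fin (card X)`) such that
`L z₂ − L z₁ = k` and `L z₃ − L z₂ = l`. -/
noncomputable def F (X : Type) [PartialOrder X] [Fintype X] (z₁ z₂ z₃ : X) (k l : ℕ) : ℕ :=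
  Nat.card {L : X ≃ Fin (Fintype.card X) // (∀ a b : X, a < b → L a < L b) ∧
    (L z₂ : ℕ) = (L z₁ : ℕ) + k ∧ (L z₃ : ℕ) = (L z₂ : ℕ) + l}


namespace CPEV

/-- Cycle on positions: `p ↦ q`, `j ↦ j-1` for `p < j ≤ q`, identity elsewhere. -/
def cyc (n p q : ℕ) (hpq : p ≤ q) (hq : q < n) : Equiv.Perm (Fin n) where
  toFun j := if (j : ℕ) = p then ⟨q, hq⟩
    else if h : p < (j : ℕ) ∧ (j : ℕ) ≤ q then ⟨(j : ℕ) - 1, by omega⟩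
    else j
  invFun j := if (j : ℕ) = q then ⟨p, by omega⟩
    else if h : p ≤ (j : ℕ) ∧ (j : ℕ) < q then ⟨(j : ℕ) + 1, by omega⟩
    else j
  left_inv := by
    intro j
    have hj := j.2
    apply Fin.ext
    simp only
    split_ifs <;> simp_all <;> omega
  right_inv := by
    intro j
    have hj := j.2
    apply Fin.ext
    simp only
    split_ifs <;> simp_all <;> omega

lemma cyc_apply {n p q : ℕ} (hpq : p ≤ q) (hq : q < n) (j : Fin n) :
    ((cyc n p q hpq hq j : Fin n) : ℕ) =
      if (j : ℕ) = p then q else if p < (j : ℕ) ∧ (j : ℕ) ≤ q then (j : ℕ) - 1 else (j : ℕ) := by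
  simp only [cyc, Equiv.coe_fn_mk]
  split_ifs <;> simp_all

lemma cyc_symm_apply {n p q : ℕ} (hpq : p ≤ q) (hq : q < n) (j : Fin n) :
    (((cyc n p q hpq hq).symm j : Fin n) : ℕ) =
      if (j : ℕ) = q then p else if p ≤ (j : ℕ) ∧ (j : ℕ) < q then (j : ℕ) + 1 else (j : ℕ) := by
  show (((cyc n p q hpq hq).invFun j : Fin n) : ℕ) = _
  simp only [cyc]
  split_ifs <;> simp_all

end CPEV

namespace CPEV

variable {X : Type} [PartialOrder X] [Fintype X]

/-- Order-preserving -/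
abbrev OP (L : X ≃ Fin (Fintype.card X)) : Prop := ∀ a b : X, a < b → L a < L b

lemma moveUp (L : X ≃ Fin (Fintype.card X)) (hL : OP L) (a : X) (q : ℕ)
    (hq : q < Fintype.card X) (hpq : (L a : ℕ) ≤ q)
    (hcond : ∀ y : X, (L a : ℕ) < (L y : ℕ) → (L y : ℕ) ≤ q → ¬ a < y) :
    ∃ L' : X ≃ Fin (Fintype.card X), OP L' ∧ ∀ y : X, ((L' y : ℕ) =
      if (L y : ℕ) = (L a : ℕ) then q
      else if (L a : ℕ) < (L y : ℕ) ∧ (L y : ℕ) ≤ q then (L y : ℕ) - 1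
      else (L y : ℕ)) := by
  refine ⟨L.trans (cyc (Fintype.card X) (L a : ℕ) q hpq hq), ?_, ?_⟩
  · have hchar : ∀ y : X, ((L.trans (cyc (Fintype.card X) (L a : ℕ) q hpq hq)) y : ℕ) =
      if (L y : ℕ) = (L a : ℕ) then q
      else if (L a : ℕ) < (L y : ℕ) ∧ (L y : ℕ) ≤ q then (L y : ℕ) - 1
      else (L y : ℕ) := fun y => cyc_apply hpq hq (L y)
    intro u v huv
    have h1 : (L u : ℕ) < (L v : ℕ) := hL u v huv
    rw [Fin.lt_def]
    have cu := hchar u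
    have cv := hchar v
    by_cases hu : (L u : ℕ) = (L a : ℕ)
    · have hua : u = a := L.injective (Fin.ext hu)
      subst hua
      have hqv : q < (L v : ℕ) := by
        by_contra hle
        exact hcond v (by omega) (by omega) huv
      split_ifs at cu cv <;> omega
    · split_ifs at cu cv <;> omega
  · exact fun y => cyc_apply hpq hq (L y)

lemma moveDown (L : X ≃ Fin (Fintype.card X)) (hL : OP L) (a : X) (p : ℕ)
    (hpq : p ≤ (L a : ℕ))
    (hcond : ∀ y : X, p ≤ (L y : ℕ) → (L y : ℕ) < (L a : ℕ) → ¬ y < a) :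
    ∃ L' : X ≃ Fin (Fintype.card X), OP L' ∧ ∀ y : X, ((L' y : ℕ) =
      if (L y : ℕ) = (L a : ℕ) then p
      else if p ≤ (L y : ℕ) ∧ (L y : ℕ) < (L a : ℕ) then (L y : ℕ) + 1
      else (L y : ℕ)) := by
  refine ⟨L.trans (cyc (Fintype.card X) p (L a : ℕ) hpq (L a).2).symm, ?_, ?_⟩
  · have hchar : ∀ y : X,
      ((L.trans (cyc (Fintype.card X) p (L a : ℕ) hpq (L a).2).symm) y : ℕ) =
      if (L y : ℕ) = (L a : ℕ) then p
      else if p ≤ (L y : ℕ) ∧ (L y : ℕ) < (L a : ℕ) then (L y : ℕ) + 1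
      else (L y : ℕ) := fun y => cyc_symm_apply hpq (L a).2 (L y)
    intro u v huv
    have h1 : (L u : ℕ) < (L v : ℕ) := hL u v huv
    rw [Fin.lt_def]
    have cu := hchar u
    have cv := hchar v
    by_cases hv : (L v : ℕ) = (L a : ℕ)
    · have hva : v = a := L.injective (Fin.ext hv)
      subst hva
      have hpu : (L u : ℕ) < p := by
        by_contra hle
        exact hcond u (by omega) (by omega) huv
      split_ifs at cu cv <;> omega
    · split_ifs at cu cv <;> omega
  · exact fun y => cyc_symm_apply hpq (L a).2 (L y)

end CPEV

namespace CPEV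

variable {X : Type} [PartialOrder X] [Fintype X]

attribute [local instance] Classical.propDecidable

variable (z₂ : X)

/-- number of elements strictly below z₂ -/
noncomputable def lowCard : ℕ := (Finset.univ.filter (fun x : X => x < z₂)).card

lemma pos_z₂ (hcomp : ∀ x : X, x = z₂ ∨ x < z₂ ∨ z₂ < x)
    (L : X ≃ Fin (Fintype.card X)) (hL : OP L) : (L z₂ : ℕ) = lowCard z₂ := by
  have himg : (Finset.univ.filter (fun x : X => x < z₂)).image L
      = Finset.Iio (L z₂) := by
    ext j
    simp only [Finset.mem_image, Finset.mem_filter, Finset.mem_univ, true_and, Finset.mem_Iio]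
    constructor
    · rintro ⟨x, hx, rfl⟩
      exact hL x z₂ hx
    · intro hj
      refine ⟨L.symm j, ?_, by simp⟩
      rcases hcomp (L.symm j) with h | h | h
      · exfalso; rw [← h] at hj; simp at hj
      · exact h
      · exfalso
        have := hL z₂ (L.symm j) h
        simp at this
        exact absurd hj (not_lt.mpr (le_of_lt this))
  have h1 : ((Finset.univ.filter (fun x : X => x < z₂)).image L).card
      = lowCard z₂ := Finset.card_image_of_injective _ L.injective
  rw [himg, Fin.card_Iio] at h1
  exact h1

variable {z₂}

/-- splice: lower part (below z₂) from `P`, the rest from `Q`. -/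
noncomputable def comb (hcomp : ∀ x : X, x = z₂ ∨ x < z₂ ∨ z₂ < x)
    (P Q : X ≃ Fin (Fintype.card X)) (hP : OP P) (hQ : OP Q) : X ≃ Fin (Fintype.card X) :=
  Equiv.ofBijective (fun x => if x < z₂ then P x else Q x) (by
    rw [Fintype.bijective_iff_injective_and_card]
    refine ⟨?_, by simp⟩
    have hPs := pos_z₂ z₂ hcomp P hP
    have hQs := pos_z₂ z₂ hcomp Q hQ
    intro u v huv
    simp only at huv
    by_cases hu : u < z₂ <;> by_cases hv : v < z₂
    · rw [if_pos hu, if_pos hv] at huv; exact P.injective huv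
    · rw [if_pos hu, if_neg hv] at huv
      exfalso
      have h1 : (P u : ℕ) < lowCard z₂ := hPs ▸ hP u z₂ hu
      have h2 : lowCard z₂ ≤ (Q v : ℕ) := by
        rcases hcomp v with h | h | h
        · rw [h, hQs]
        · exact absurd h hv
        · exact le_of_lt (hQs ▸ hQ z₂ v h)
      rw [huv] at h1; omega
    · rw [if_neg hu, if_pos hv] at huv
      exfalso
      have h1 : (P v : ℕ) < lowCard z₂ := hPs ▸ hP v z₂ hv
      have h2 : lowCard z₂ ≤ (Q u : ℕ) := by
        rcases hcomp u with h | h | h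
        · rw [h, hQs]
        · exact absurd h hu
        · exact le_of_lt (hQs ▸ hQ z₂ u h)
      rw [← huv] at h1; omega
    · rw [if_neg hu, if_neg hv] at huv; exact Q.injective huv)

lemma comb_apply (hcomp : ∀ x : X, x = z₂ ∨ x < z₂ ∨ z₂ < x)
    (P Q : X ≃ Fin (Fintype.card X)) (hP : OP P) (hQ : OP Q) (x : X) :
    comb hcomp P Q hP hQ x = if x < z₂ then P x else Q x := rfl

lemma comb_OP (hcomp : ∀ x : X, x = z₂ ∨ x < z₂ ∨ z₂ < x)
    (P Q : X ≃ Fin (Fintype.card X)) (hP : OP P) (hQ : OP Q) :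
    OP (comb hcomp P Q hP hQ) := by
  have hPs := pos_z₂ z₂ hcomp P hP
  have hQs := pos_z₂ z₂ hcomp Q hQ
  intro u v huv
  rw [Fin.lt_def]
  rw [comb_apply, comb_apply]
  by_cases hu : u < z₂ <;> by_cases hv : v < z₂
  · rw [if_pos hu, if_pos hv]; exact hP u v huv
  · rw [if_pos hu, if_neg hv]
    have h1 : (P u : ℕ) < lowCard z₂ := hPs ▸ hP u z₂ hu
    have h2 : lowCard z₂ ≤ (Q v : ℕ) := by
      rcases hcomp v with h | h | h
      · rw [h, hQs]
      · exact absurd h hv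
      · exact le_of_lt (hQs ▸ hQ z₂ v h)
    omega
  · rw [if_neg hu, if_pos hv]
    exfalso
    rcases hcomp u with h | h | h
    · exact lt_asymm (h ▸ huv) hv
    · exact hu h
    · exact lt_irrefl z₂ (lt_trans (lt_trans h huv) hv)
  · rw [if_neg hu, if_neg hv]
    exact hQ u v huv

end CPEV

namespace CPEV

variable {X : Type} [PartialOrder X] [Fintype X]

/-- The subtype underlying `F`. -/
abbrev ESub (z₁ z₂ z₃ : X) (k l : ℕ) :=
  {L : X ≃ Fin (Fintype.card X) // (∀ a b : X, a < b → L a < L b) ∧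
    (L z₂ : ℕ) = (L z₁ : ℕ) + k ∧ (L z₃ : ℕ) = (L z₂ : ℕ) + l}

noncomputable def swapEquiv (z₁ z₂ z₃ : X) (h12 : z₁ < z₂) (h23 : z₂ < z₃)
    (hcomp : ∀ x : X, x = z₂ ∨ x < z₂ ∨ z₂ < x) (k l : ℕ) :
    (ESub z₁ z₂ z₃ k (l+1) × ESub z₁ z₂ z₃ (k+1) l) ≃
      (ESub z₁ z₂ z₃ (k+1) (l+1) × ESub z₁ z₂ z₃ k l) where
  toFun := fun ⟨⟨P, hP⟩, ⟨Q, hQ⟩⟩ =>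
    ⟨⟨comb hcomp Q P hQ.1 hP.1, comb_OP hcomp Q P hQ.1 hP.1, by
        rw [comb_apply, comb_apply, if_neg (lt_irrefl z₂), if_pos h12]
        rw [pos_z₂ z₂ hcomp P hP.1, ← pos_z₂ z₂ hcomp Q hQ.1]
        exact hQ.2.1, by
        rw [comb_apply, comb_apply, if_neg (lt_irrefl z₂), if_neg (asymm h23)]
        exact hP.2.2⟩,
     ⟨comb hcomp P Q hP.1 hQ.1, comb_OP hcomp P Q hP.1 hQ.1, by
        rw [comb_apply, comb_apply, if_neg (lt_irrefl z₂), if_pos h12]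
        rw [pos_z₂ z₂ hcomp Q hQ.1, ← pos_z₂ z₂ hcomp P hP.1]
        exact hP.2.1, by
        rw [comb_apply, comb_apply, if_neg (lt_irrefl z₂), if_neg (asymm h23)]
        exact hQ.2.2⟩⟩
  invFun := fun ⟨⟨R, hR⟩, ⟨S, hS⟩⟩ =>
    ⟨⟨comb hcomp S R hS.1 hR.1, comb_OP hcomp S R hS.1 hR.1, by
        rw [comb_apply, comb_apply, if_neg (lt_irrefl z₂), if_pos h12]
        rw [pos_z₂ z₂ hcomp R hR.1, ← pos_z₂ z₂ hcomp S hS.1]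
        exact hS.2.1, by
        rw [comb_apply, comb_apply, if_neg (lt_irrefl z₂), if_neg (asymm h23)]
        exact hR.2.2⟩,
     ⟨comb hcomp R S hR.1 hS.1, comb_OP hcomp R S hR.1 hS.1, by
        rw [comb_apply, comb_apply, if_neg (lt_irrefl z₂), if_pos h12]
        rw [pos_z₂ z₂ hcomp S hS.1, ← pos_z₂ z₂ hcomp R hR.1]
        exact hR.2.1, by
        rw [comb_apply, comb_apply, if_neg (lt_irrefl z₂), if_neg (asymm h23)]
        exact hS.2.2⟩⟩
  left_inv := by
    rintro ⟨⟨P, hP⟩, ⟨Q, hQ⟩⟩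
    refine Prod.ext (Subtype.ext (Equiv.ext fun x => ?_)) (Subtype.ext (Equiv.ext fun x => ?_)) <;>
      · by_cases hx : x < z₂ <;> simp [comb_apply, hx]
  right_inv := by
    rintro ⟨⟨R, hR⟩, ⟨S, hS⟩⟩
    refine Prod.ext (Subtype.ext (Equiv.ext fun x => ?_)) (Subtype.ext (Equiv.ext fun x => ?_)) <;>
      · by_cases hx : x < z₂ <;> simp [comb_apply, hx]

theorem product_eq (z₁ z₂ z₃ : X) (h12 : z₁ < z₂) (h23 : z₂ < z₃)
    (hcomp : ∀ x : X, x = z₂ ∨ x < z₂ ∨ z₂ < x) (k l : ℕ) :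
    Nat.card (ESub z₁ z₂ z₃ k (l+1)) * Nat.card (ESub z₁ z₂ z₃ (k+1) l) =
      Nat.card (ESub z₁ z₂ z₃ (k+1) (l+1)) * Nat.card (ESub z₁ z₂ z₃ k l) := by
  rw [← Nat.card_prod, ← Nat.card_prod]
  exact Nat.card_congr (swapEquiv z₁ z₂ z₃ h12 h23 hcomp k l)

end CPEV

namespace CPEV

variable {X : Type} [PartialOrder X] [Fintype X]

attribute [local instance] Classical.propDecidable

lemma no_witness {z₁ z₂ z₃ : X} {k l : ℕ}
    (h : Nat.card (ESub z₁ z₂ z₃ k l) = 0)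
    (L : X ≃ Fin (Fintype.card X)) (hOP : OP L)
    (e1 : (L z₂ : ℕ) = (L z₁ : ℕ) + k) (e2 : (L z₃ : ℕ) = (L z₂ : ℕ) + l) : False := by
  have : 0 < Nat.card (ESub z₁ z₂ z₃ k l) := @Nat.card_pos _ ⟨⟨L, hOP, e1, e2⟩⟩ _
  omega

lemma count_between (u v : X) (k : ℕ) (hk : 1 ≤ k)
    (hT : k ≤ (Finset.univ.filter (fun y : X => u < y ∧ y < v)).card)
    (M : X ≃ Fin (Fintype.card X)) (hM : OP M) (e : (M v : ℕ) = (M u : ℕ) + k) : False := by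
  classical
  set T := Finset.univ.filter (fun y : X => u < y ∧ y < v) with hTdef
  have huT : u ∉ T := by simp [hTdef]
  have hsub : (insert u T).image M ⊆ Finset.Ico (M u) (M v) := by
    intro j hj
    simp only [Finset.mem_image, Finset.mem_insert, hTdef, Finset.mem_filter,
      Finset.mem_univ, true_and] at hj
    obtain ⟨y, hy, rfl⟩ := hj
    rw [Finset.mem_Ico]
    rcases hy with rfl | ⟨hy1, hy2⟩
    · exact ⟨le_refl _, by rw [Fin.lt_def]; omega⟩
    · exact ⟨le_of_lt (hM _ _ hy1), hM _ _ hy2⟩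
  have h1 : ((insert u T).image M).card = T.card + 1 := by
    rw [Finset.card_image_of_injective _ M.injective, Finset.card_insert_of_notMem huT]
  have h2 := Finset.card_le_card hsub
  rw [h1, Fin.card_Ico] at h2
  omega

end CPEV

namespace CPEV

variable {X : Type} [PartialOrder X] [Fintype X]

attribute [local instance] Classical.propDecidable

theorem all_comp (z₁ z₂ z₃ : X) (h12 : z₁ < z₂) (h23 : z₂ < z₃) (k l : ℕ)
    (hk : 1 ≤ k) (hl : 1 ≤ l)
    (h1 : Nat.card (ESub z₁ z₂ z₃ k (l+2)) = 0)
    (h2 : Nat.card (ESub z₁ z₂ z₃ (k+2) l) = 0)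
    (hkl : Nonempty (ESub z₁ z₂ z₃ k l))
    (hk1 : Nonempty (ESub z₁ z₂ z₃ (k+1) (l+1))) :
    ∀ x : X, x = z₂ ∨ x < z₂ ∨ z₂ < x := by
  intro x₀
  by_contra hx₀
  push_neg at hx₀
  obtain ⟨hx₀ne, hx₀1, hx₀2⟩ := hx₀
  obtain ⟨⟨L, hL, eK, eL⟩⟩ := hk1
  have inj : ∀ u v : X, (L u : ℕ) = (L v : ℕ) → u = v := fun u v h => L.injective (Fin.ext h)
  have hOPn : ∀ (u v : X), u < v → (L u : ℕ) < (L v : ℕ) := fun u v h => hL u v h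
  have hx₀z : (L x₀ : ℕ) ≠ (L z₂ : ℕ) := fun h => hx₀ne (inj _ _ h)
  have h12n : (L z₁ : ℕ) < (L z₂ : ℕ) := hOPn _ _ h12
  have h23n : (L z₂ : ℕ) < (L z₃ : ℕ) := hOPn _ _ h23
  rcases lt_or_gt_of_ne hx₀z with hlow | hhigh
  · -- x₀ below z₂ in L
    set BadLow := Finset.univ.filter
      (fun y : X => ¬ y < z₂ ∧ ¬ z₂ < y ∧ y ≠ z₂ ∧ (L y : ℕ) < (L z₂ : ℕ)) with hBL
    have hne : BadLow.Nonempty := ⟨x₀, by simp [hBL, hx₀1, hx₀2, hx₀ne]; exact hlow⟩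
    obtain ⟨b, hbmem, hbmax⟩ := Finset.exists_max_image BadLow (fun y => (L y : ℕ)) hne
    simp only [hBL, Finset.mem_filter, Finset.mem_univ, true_and] at hbmem
    obtain ⟨hb1, hb2, hbne, hbpos⟩ := hbmem
    have hclean : ∀ y : X, (L b : ℕ) < (L y : ℕ) → (L y : ℕ) < (L z₂ : ℕ) → y < z₂ := by
      intro y hy1 hy2
      by_contra hy
      have hyne : y ≠ z₂ := fun h => by rw [h] at hy2; omega
      have hzy : ¬ z₂ < y := fun h => by have := hOPn _ _ h; omega
      have hmem : y ∈ BadLow := by simp [hBL, hy, hzy, hyne]; exact hy2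
      have := hbmax y hmem
      omega
    obtain ⟨L', hL', hchar⟩ := moveUp L hL b (L z₂ : ℕ) (L z₂).2 (le_of_lt hbpos)
      (by
        intro y hy1 hy2 hby
        rcases eq_or_lt_of_le hy2 with heq | hlt2
        · exact hb1 ((inj y z₂ heq) ▸ hby)
        · exact hb1 (lt_trans hby (hclean y hy1 hlt2)))
    have hOPn' : ∀ (u v : X), u < v → (L' u : ℕ) < (L' v : ℕ) := fun u v h => hL' u v h
    have c1 := hchar z₁; have c2 := hchar z₂; have c3 := hchar z₃; have cb := hchar b
    have hbz1 : (L b : ℕ) ≠ (L z₁ : ℕ) := fun h => hb1 (inj b z₁ h ▸ h12)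
    have e2' : (L' z₂ : ℕ) = (L z₂ : ℕ) - 1 := by
      rw [c2, if_neg (by omega), if_pos (by omega)]
    have e3' : (L' z₃ : ℕ) = (L z₃ : ℕ) := by
      rw [c3, if_neg (by omega), if_neg (by omega)]
    have eb' : (L' b : ℕ) = (L z₂ : ℕ) := by rw [cb, if_pos rfl]
    rcases lt_or_gt_of_ne hbz1 with hcase2 | hcase1
    · -- b below z₁ : L' ∈ A(k+1, l+2)
      have e1' : (L' z₁ : ℕ) = (L z₁ : ℕ) - 1 := by
        rw [c1, if_neg (by omega), if_pos (by omega)]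
      have hmidchar : ∀ y : X, (L' z₁ : ℕ) < (L' y : ℕ) → (L' y : ℕ) < (L' z₂ : ℕ) →
          y < z₂ := by
        intro y hy1 hy2
        have cy := hchar y
        by_cases hyb : (L y : ℕ) = (L b : ℕ)
        · exfalso; rw [if_pos hyb] at cy; omega
        · rw [if_neg hyb] at cy
          by_cases hyw : (L b : ℕ) < (L y : ℕ) ∧ (L y : ℕ) ≤ (L z₂ : ℕ)
          · rw [if_pos hyw] at cy
            exact hclean y (by omega) (by omega)
          · rw [if_neg hyw] at cy
            exfalso
            omega
      by_cases hmid : ∀ y : X, (L' z₁ : ℕ) < (L' y : ℕ) → (L' y : ℕ) < (L' z₂ : ℕ) → z₁ < y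
      · -- all mids above z₁ : counting contradiction with F(k,l) > 0
        obtain ⟨⟨M, hM, fK, fL⟩⟩ := hkl
        refine count_between z₁ z₂ k hk ?_ M hM fK
        have hsub : (Finset.Ioo (L' z₁) (L' z₂)).image L'.symm ⊆
            Finset.univ.filter (fun y : X => z₁ < y ∧ y < z₂) := by
          intro y hy
          simp only [Finset.mem_image, Finset.mem_Ioo] at hy
          obtain ⟨j, ⟨hj1, hj2⟩, rfl⟩ := hy
          rw [Fin.lt_def] at hj1 hj2
          have hLj : (L' (L'.symm j) : ℕ) = (j : ℕ) := by rw [Equiv.apply_symm_apply]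
          simp only [Finset.mem_filter, Finset.mem_univ, true_and]
          exact ⟨hmid _ (by omega) (by omega), hmidchar _ (by omega) (by omega)⟩
        have hcard : ((Finset.Ioo (L' z₁) (L' z₂)).image L'.symm).card = k := by
          rw [Finset.card_image_of_injective _ L'.symm.injective, Fin.card_Ioo]
          omega
        have := Finset.card_le_card hsub
        omega
      · -- some mid not above z₁ : push it below z₁, get A(k, l+2)
        push_neg at hmid
        obtain ⟨y₀, hy₀1, hy₀2, hy₀3⟩ := hmid
        set MidBad := Finset.univ.filter
          (fun y : X => (L' z₁ : ℕ) < (L' y : ℕ) ∧ (L' y : ℕ) < (L' z₂ : ℕ) ∧ ¬ z₁ < y)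
          with hMB
        have hMBne : MidBad.Nonempty := ⟨y₀, by simp [hMB]; exact ⟨hy₀1, hy₀2, hy₀3⟩⟩
        obtain ⟨x, hxmem, hxmin⟩ := Finset.exists_min_image MidBad (fun y => (L' y : ℕ)) hMBne
        simp only [hMB, Finset.mem_filter, Finset.mem_univ, true_and] at hxmem
        obtain ⟨hx1, hx2, hx3⟩ := hxmem
        obtain ⟨L'', hL'', hchar2⟩ := moveDown L' hL' x (L' z₁ : ℕ) (le_of_lt hx1)
          (by
            intro y hy1 hy2 hyx
            rcases eq_or_lt_of_le hy1 with heq | hlt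
            · have hyz : y = z₁ := L'.injective (Fin.ext heq.symm)
              exact hx3 (hyz ▸ hyx)
            · by_cases hzy : z₁ < y
              · exact hx3 (lt_trans hzy hyx)
              · have hmem : y ∈ MidBad := by
                  simp only [hMB, Finset.mem_filter, Finset.mem_univ, true_and]
                  exact ⟨hlt, by omega, hzy⟩
                have := hxmin y hmem
                omega)
        have d1 := hchar2 z₁; have d2 := hchar2 z₂; have d3 := hchar2 z₃
        have g1 : (L'' z₁ : ℕ) = (L' z₁ : ℕ) + 1 := by
          rw [d1, if_neg (by omega), if_pos (by omega)]
        have g2 : (L'' z₂ : ℕ) = (L' z₂ : ℕ) := by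
          rw [d2, if_neg (by omega), if_neg (by omega)]
        have g3 : (L'' z₃ : ℕ) = (L' z₃ : ℕ) := by
          rw [d3, if_neg (by omega), if_neg (by omega)]
        exact no_witness h1 L'' hL'' (by omega) (by omega)
    · -- b between z₁ and z₂ : direct witness in A(k, l+2)
      have e1' : (L' z₁ : ℕ) = (L z₁ : ℕ) := by
        rw [c1, if_neg (by omega), if_neg (by omega)]
      exact no_witness h1 L' hL' (by omega) (by omega)
  · -- x₀ above z₂ in L
    set BadHigh := Finset.univ.filter
      (fun y : X => ¬ y < z₂ ∧ ¬ z₂ < y ∧ y ≠ z₂ ∧ (L z₂ : ℕ) < (L y : ℕ)) with hBH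
    have hne : BadHigh.Nonempty := ⟨x₀, by simp [hBH, hx₀1, hx₀2, hx₀ne]; exact hhigh⟩
    obtain ⟨b, hbmem, hbmin⟩ := Finset.exists_min_image BadHigh (fun y => (L y : ℕ)) hne
    simp only [hBH, Finset.mem_filter, Finset.mem_univ, true_and] at hbmem
    obtain ⟨hb1, hb2, hbne, hbpos⟩ := hbmem
    have hclean : ∀ y : X, (L z₂ : ℕ) < (L y : ℕ) → (L y : ℕ) < (L b : ℕ) → z₂ < y := by
      intro y hy1 hy2
      by_contra hy
      have hyne : y ≠ z₂ := fun h => by rw [h] at hy1; omega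
      have hzy : ¬ y < z₂ := fun h => by have := hOPn _ _ h; omega
      have hmem : y ∈ BadHigh := by simp [hBH, hy, hzy, hyne]; exact hy1
      have := hbmin y hmem
      omega
    obtain ⟨L', hL', hchar⟩ := moveDown L hL b (L z₂ : ℕ) (le_of_lt hbpos)
      (by
        intro y hy1 hy2 hyb
        rcases eq_or_lt_of_le hy1 with heq | hlt2
        · exact hb2 ((inj z₂ y heq) ▸ hyb)
        · exact hb2 (lt_trans (hclean y hlt2 hy2) hyb))
    have hOPn' : ∀ (u v : X), u < v → (L' u : ℕ) < (L' v : ℕ) := fun u v h => hL' u v h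
    have inj' : ∀ u v : X, (L' u : ℕ) = (L' v : ℕ) → u = v := fun u v h => L'.injective (Fin.ext h)
    have c1 := hchar z₁; have c2 := hchar z₂; have c3 := hchar z₃; have cb := hchar b
    have hbz3 : (L b : ℕ) ≠ (L z₃ : ℕ) := fun h => hb2 (by rw [inj b z₃ h]; exact h23)
    have e2' : (L' z₂ : ℕ) = (L z₂ : ℕ) + 1 := by
      rw [c2, if_neg (by omega), if_pos (by omega)]
    have e1' : (L' z₁ : ℕ) = (L z₁ : ℕ) := by
      rw [c1, if_neg (by omega), if_neg (by omega)]
    have eb' : (L' b : ℕ) = (L z₂ : ℕ) := by rw [cb, if_pos rfl]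
    rcases lt_or_gt_of_ne hbz3 with hbmid | hcase2
    · -- b between z₂ and z₃ : direct witness in A(k+2, l)
      have e3' : (L' z₃ : ℕ) = (L z₃ : ℕ) := by
        rw [c3, if_neg (by omega), if_neg (by omega)]
      exact no_witness h2 L' hL' (by omega) (by omega)
    · -- b above z₃ : L' ∈ A(k+2, l+1)
      have e3' : (L' z₃ : ℕ) = (L z₃ : ℕ) + 1 := by
        rw [c3, if_neg (by omega), if_pos (by omega)]
      have hmidchar : ∀ y : X, (L' z₂ : ℕ) < (L' y : ℕ) → (L' y : ℕ) < (L' z₃ : ℕ) →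
          z₂ < y := by
        intro y hy1 hy2
        have cy := hchar y
        by_cases hyb : (L y : ℕ) = (L b : ℕ)
        · exfalso; rw [if_pos hyb] at cy; omega
        · rw [if_neg hyb] at cy
          by_cases hyw : (L z₂ : ℕ) ≤ (L y : ℕ) ∧ (L y : ℕ) < (L b : ℕ)
          · rw [if_pos hyw] at cy
            exact hclean y (by omega) (by omega)
          · rw [if_neg hyw] at cy
            exfalso
            omega
      by_cases hmid : ∀ y : X, (L' z₂ : ℕ) < (L' y : ℕ) → (L' y : ℕ) < (L' z₃ : ℕ) → y < z₃
      · -- all upper mids below z₃ : counting contradiction with F(k,l) > 0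
        obtain ⟨⟨M, hM, fK, fL⟩⟩ := hkl
        refine count_between z₂ z₃ l hl ?_ M hM fL
        have hsub : (Finset.Ioo (L' z₂) (L' z₃)).image L'.symm ⊆
            Finset.univ.filter (fun y : X => z₂ < y ∧ y < z₃) := by
          intro y hy
          simp only [Finset.mem_image, Finset.mem_Ioo] at hy
          obtain ⟨j, ⟨hj1, hj2⟩, rfl⟩ := hy
          rw [Fin.lt_def] at hj1 hj2
          have hLj : (L' (L'.symm j) : ℕ) = (j : ℕ) := by rw [Equiv.apply_symm_apply]
          simp only [Finset.mem_filter, Finset.mem_univ, true_and]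
          exact ⟨hmidchar _ (by omega) (by omega), hmid _ (by omega) (by omega)⟩
        have hcard : ((Finset.Ioo (L' z₂) (L' z₃)).image L'.symm).card = l := by
          rw [Finset.card_image_of_injective _ L'.symm.injective, Fin.card_Ioo]
          omega
        have := Finset.card_le_card hsub
        omega
      · -- some upper mid not below z₃ : push it above z₃, get A(k+2, l)
        push_neg at hmid
        obtain ⟨y₀, hy₀1, hy₀2, hy₀3⟩ := hmid
        set MidBad := Finset.univ.filter
          (fun y : X => (L' z₂ : ℕ) < (L' y : ℕ) ∧ (L' y : ℕ) < (L' z₃ : ℕ) ∧ ¬ y < z₃)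
          with hMB
        have hMBne : MidBad.Nonempty := ⟨y₀, by simp [hMB]; exact ⟨hy₀1, hy₀2, hy₀3⟩⟩
        obtain ⟨x, hxmem, hxmax⟩ := Finset.exists_max_image MidBad (fun y => (L' y : ℕ)) hMBne
        simp only [hMB, Finset.mem_filter, Finset.mem_univ, true_and] at hxmem
        obtain ⟨hx1, hx2, hx3⟩ := hxmem
        obtain ⟨L'', hL'', hchar2⟩ := moveUp L' hL' x (L' z₃ : ℕ) (L' z₃).2 (le_of_lt hx2)
          (by
            intro y hy1 hy2 hxy
            rcases eq_or_lt_of_le hy2 with heq | hlt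
            · have hyz : y = z₃ := inj' y z₃ heq
              exact hx3 (hyz ▸ hxy)
            · by_cases hzy : y < z₃
              · exact hx3 (lt_trans hxy hzy)
              · have hmem : y ∈ MidBad := by
                  simp only [hMB, Finset.mem_filter, Finset.mem_univ, true_and]
                  exact ⟨by omega, hlt, hzy⟩
                have := hxmax y hmem
                omega)
        have d1 := hchar2 z₁; have d2 := hchar2 z₂; have d3 := hchar2 z₃
        have g1 : (L'' z₁ : ℕ) = (L' z₁ : ℕ) := by
          rw [d1, if_neg (by omega), if_neg (by omega)]
        have g2 : (L'' z₂ : ℕ) = (L' z₂ : ℕ) := by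
          rw [d2, if_neg (by omega), if_neg (by omega)]
        have g3 : (L'' z₃ : ℕ) = (L' z₃ : ℕ) - 1 := by
          rw [d3, if_neg (by omega), if_pos (by omega)]
        exact no_witness h2 L'' hL'' (by omega) (by omega)

end CPEV


theorem cross_product_equality_vanishing_case (X : Type) [PartialOrder X] [Fintype X]
    (z₁ z₂ z₃ : X) (h12 : z₁ < z₂) (h23 : z₂ < z₃)
    (k l : ℕ) (hk : 1 ≤ k) (hl : 1 ≤ l)
    (h1 : F X z₁ z₂ z₃ k (l + 2) = 0) (h2 : F X z₁ z₂ z₃ (k + 2) l = 0)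
    (h3 : 0 < F X z₁ z₂ z₃ k l * F X z₁ z₂ z₃ (k + 1) (l + 1)) :
    F X z₁ z₂ z₃ k (l + 1) * F X z₁ z₂ z₃ (k + 1) l =
      F X z₁ z₂ z₃ (k + 1) (l + 1) * F X z₁ z₂ z₃ k l := by
  have hF : ∀ k' l' : ℕ, F X z₁ z₂ z₃ k' l' = Nat.card (CPEV.ESub z₁ z₂ z₃ k' l') :=
    fun _ _ => rfl
  rw [hF] at h1 h2
  have ha : 0 < F X z₁ z₂ z₃ k l := by
    rcases Nat.eq_zero_or_pos (F X z₁ z₂ z₃ k l) with h | h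
    · rw [h, zero_mul] at h3; exact absurd h3 (lt_irrefl 0)
    · exact h
  have hb : 0 < F X z₁ z₂ z₃ (k + 1) (l + 1) := by
    rcases Nat.eq_zero_or_pos (F X z₁ z₂ z₃ (k + 1) (l + 1)) with h | h
    · rw [h, mul_zero] at h3; exact absurd h3 (lt_irrefl 0)
    · exact h
  have hkl : Nonempty (CPEV.ESub z₁ z₂ z₃ k l) := (Nat.card_pos_iff.mp (hF k l ▸ ha)).1
  have hk1 : Nonempty (CPEV.ESub z₁ z₂ z₃ (k + 1) (l + 1)) :=
    (Nat.card_pos_iff.mp (hF (k + 1) (l + 1) ▸ hb)).1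
  have hcomp := CPEV.all_comp z₁ z₂ z₃ h12 h23 k l hk hl h1 h2 hkl hk1
  rw [hF, hF, hF, hF]
  exact CPEV.product_eq z₁ z₂ z₃ h12 h23 hcomp k l
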